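/- arXiv:1811.06392 — 2 statements merged into one kernel-verified Lean document; each statement's English description precedes it below -/
import Mathlib

section
/- Let A : ℕ → ℕ be defined by A(0) = 1, A(1) = 2, and A(n) = 1 + C(A(n−2)+1, 2) + A(n−2)·(A(n−1) − A(n−2)) for n ≥ 2. Then for all n ≥ 3, one has A(n) ≤ A(n−1)·A(n−2). -/
def A : ℕ → ℕ
  | 0 => 1
  | 1 => 2
  | n + 2 => 1 + Nat.choose (A n + 1) 2 + A n * (A (n + 1) - A n)

lemma Apos : ∀ n, 1 ≤ A n := by
  intro n
  induction n using Nat.strong_induction_on with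
  | _ n ih =>
    match n with
    | 0 => simp [A]
    | 1 => simp [A]
    | n + 2 => show 1 ≤ 1 + _ + _; omega

lemma Amono : ∀ n, A n ≤ A (n + 1) := by
  intro n
  induction n using Nat.strong_induction_on with
  | _ n ih =>
    match n with
    | 0 => simp [A]
    | n + 1 =>
      show A (n + 1) ≤ 1 + Nat.choose (A n + 1) 2 + A n * (A (n + 1) - A n)
      have h1 := Apos n
      have h2 : A n ≤ A (n + 1) := match n with
        | 0 => by simp [A]
        | m + 1 => ih (m + 1) (by omega)
      have h3 : A n * (A (n + 1) - A n) ≥ A (n + 1) - A n :=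
        Nat.le_mul_of_pos_left _ h1
      have h4 : A n ≤ Nat.choose (A n + 1) 2 := by
        rw [Nat.choose_succ_succ, Nat.choose_one_right]
        exact Nat.le_add_right _ _
      omega

lemma Atwo : ∀ n, 2 ≤ A (n + 1) := by
  intro n
  induction n with
  | zero => simp [A]
  | succ m ih => have := Amono (m + 1); omega

theorem stmt_3 : ∀ n : ℕ, 3 ≤ n → A n ≤ A (n - 1) * A (n - 2) := by
  intro n hn
  obtain ⟨m, rfl⟩ : ∃ m, n = m + 3 := ⟨n - 3, by omega⟩
  show 1 + Nat.choose (A (m + 1) + 1) 2 + A (m + 1) * (A (m + 2) - A (m + 1))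
      ≤ A (m + 2) * A (m + 1)
  set a := A (m + 1) with ha
  set b := A (m + 2) with hb
  have h2 : 2 ≤ a := Atwo m
  have hab : a ≤ b := Amono (m + 1)
  obtain ⟨d, hd⟩ : ∃ d, b = a + d := ⟨b - a, by omega⟩
  rw [hd]
  have hc : Nat.choose (a + 1) 2 * 2 = (a + 1) * a := by
    rw [Nat.choose_two_right]
    simp only [Nat.add_sub_cancel]
    exact Nat.div_mul_cancel ((mul_comm a (a+1)) ▸ (Nat.even_mul_succ_self a).two_dvd)
  have hsub : a + d - a = d := by omega
  rw [hsub]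
  nlinarith [hc, h2]
end

section
/- Let A : ℕ → ℕ be defined by A(0) = 1, A(1) = 2, and A(n) = 1 + C(A(n−2)+1, 2) + A(n−2)·(A(n−1) − A(n−2)) for n ≥ 2. Then the sequence of real numbers A(n)/A(n+1) tends to 0 as n → ∞. -/
open Filter

lemma A_pos : ∀ n, 0 < A n
  | 0 => by decide
  | 1 => by decide
  | n + 2 => by
    rw [show A (n+2) = 1 + Nat.choose (A n + 1) 2 + A n * (A (n+1) - A n) from rfl]
    omega

lemma A_lt (n : ℕ) : A n < A (n + 1) := by
  induction n with
  | zero => decide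
  | succ n ih =>
    have hp := A_pos n
    obtain ⟨k, hk⟩ := Nat.exists_eq_add_of_le ih.le
    have h2 : A (n + 2) = 1 + Nat.choose (A n + 1) 2 + A n * (A (n+1) - A n) := rfl
    rw [h2, hk]
    have hsub : A n + k - A n = k := by omega
    rw [hsub]
    have hc : A n ≤ Nat.choose (A n + 1) 2 := by
      rw [Nat.choose_two_right]
      simp only [Nat.add_sub_cancel]
      rw [Nat.le_div_iff_mul_le (by norm_num)]
      nlinarith
    nlinarith

lemma A_lb (n : ℕ) : n + 1 ≤ A n := by
  induction n with
  | zero => decide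
  | succ n ih => have := A_lt n; omega

lemma A_key (n : ℕ) : A n * A (n + 1) ≤ 2 * A (n + 2) := by
  have hp := A_pos n
  obtain ⟨k, hk⟩ := Nat.exists_eq_add_of_le (A_lt n).le
  have h2 : A (n + 2) = 1 + Nat.choose (A n + 1) 2 + A n * (A (n+1) - A n) := rfl
  rw [h2, hk]
  have hsub : A n + k - A n = k := by omega
  rw [hsub]
  have hc : 2 * Nat.choose (A n + 1) 2 = (A n + 1) * A n := by
    rw [Nat.choose_two_right]
    simp only [Nat.add_sub_cancel]
    have he : Even ((A n + 1) * A n) := by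
      rw [mul_comm]; exact Nat.even_mul_succ_self (A n)
    exact Nat.two_mul_div_two_of_even he
  nlinarith

theorem stmt_4 :
    Tendsto (fun n : ℕ => (A n : ℝ) / (A (n + 1) : ℝ)) atTop (nhds 0) := by
  have hg : Tendsto (fun n : ℕ => (2 : ℝ) / n) atTop (nhds 0) :=
    tendsto_const_div_atTop_nhds_zero_nat 2
  apply squeeze_zero' ?_ ?_ hg
  · filter_upwards with n
    positivity
  · filter_upwards [eventually_ge_atTop 2] with n hn
    obtain ⟨k, rfl⟩ : ∃ k, n = k + 2 := ⟨n - 2, by omega⟩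
    have h1 : (A (k+1) : ℝ) * A (k+2) ≤ 2 * A (k+3) := by
      exact_mod_cast A_key (k+1)
    have h2 : ((k : ℝ) + 2) ≤ A (k+1) := by
      have := A_lb (k+1); exact_mod_cast this
    have p1 : (0 : ℝ) < A (k+2) := by exact_mod_cast A_pos (k+2)
    have p2 : (0 : ℝ) < A (k+3) := by exact_mod_cast A_pos (k+3)
    have pn : (0 : ℝ) < (k : ℝ) + 2 := by positivity
    rw [show ((k + 2 : ℕ) : ℝ) = (k : ℝ) + 2 by push_cast; ring,
      div_le_div_iff₀ p2 pn]
    nlinarith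
end
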